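/- arXiv:1607.05542 — 3 statements merged into one kernel-verified Lean document; each statement's English description precedes it below -/
import Mathlib

section
/- Let ν be a probability measure on a measurable space, let T be a measurable map with pushforward θ = T∗ν, and suppose θ is absolutely continuous with respect to ν with density L = dθ/dν. If there exists a nonnegative random variable ρ with E_ν[ρ] = 1 such that (L ∘ T)·ρ = 1 ν-a.s., then the relative entropy H(θ|ν) = E_ν[L log L] equals E_ν[−log ρ]. -/
open MeasureTheory Real
open scoped ENNReal NNReal

/-- If `θ = T∗ν` has density `L` w.r.t. `ν` and there exists `ρ ≥ 0` with `E_ν[ρ] = 1`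
such that `(L ∘ T) ρ = 1` ν-a.s., then `H(θ|ν) = E_ν[L log L] = E_ν[-log ρ]`. -/
theorem stmt_2 {Ω : Type*} [MeasurableSpace Ω] (ν : Measure Ω) [IsProbabilityMeasure ν]
    (T : Ω → Ω) (hT : Measurable T)
    (L : Ω → ℝ) (hLmeas : Measurable L) (hLpos : 0 ≤ L)
    (hdens : ν.map T = ν.withDensity (fun ω => ENNReal.ofReal (L ω)))
    (ρ : Ω → ℝ) (hρmeas : Measurable ρ) (hρpos : 0 ≤ ρ)
    (hρmean : ∫ ω, ρ ω ∂ν = 1)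
    (hkey : ∀ᵐ ω ∂ν, L (T ω) * ρ ω = 1)
    (hint1 : Integrable (fun ω => L ω * log (L ω)) ν)
    (hint2 : Integrable (fun ω => log (ρ ω)) ν) :
    ∫ ω, L ω * log (L ω) ∂ν = ∫ ω, -log (ρ ω) ∂ν := by
  have h1 : ∫ ω, L ω * log (L ω) ∂ν = ∫ x, log (L x) ∂(ν.map T) := by
    rw [hdens]
    have : (fun ω => ENNReal.ofReal (L ω)) = fun ω => ((L ω).toNNReal : ℝ≥0∞) := by
      funext ω; simp [ENNReal.ofReal]
    rw [this, integral_withDensity_eq_integral_smul (hLmeas.real_toNNReal)]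
    congr 1
    funext ω
    simp [NNReal.smul_def, Real.coe_toNNReal _ (hLpos ω)]
  have h2 : ∫ x, log (L x) ∂(ν.map T) = ∫ ω, log (L (T ω)) ∂ν :=
    integral_map hT.aemeasurable (hLmeas.log.aestronglyMeasurable)
  have h3 : ∫ ω, log (L (T ω)) ∂ν = ∫ ω, -log (ρ ω) ∂ν := by
    refine integral_congr_ae ?_
    filter_upwards [hkey] with ω hω
    have hρne : ρ ω ≠ 0 := by
      intro h; rw [h, mul_zero] at hω; exact one_ne_zero hω.symm
    have hL : L (T ω) = (ρ ω)⁻¹ := by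
      field_simp at hω ⊢; linarith
    rw [hL, Real.log_inv]
  rw [h1, h2, h3]
end

section
/- In the abstract framework (ν a probability on Wiener space, β a ν-Brownian motion with the same filtration as the coordinate process W, and (W^u) perturbations satisfying the Girsanov identity E_ν[f] = E_ν[f∘W^u · ρ(−δ_β u)] for bounded drifts u), for every u with a.s. bounded adapted density the relative entropy satisfies H(W^u∗ν | ν) ≤ ½ E_ν[|u|_H²], where |u|_H² = ∫₀¹|u̇(s)|²ds. -/
open MeasureTheory Real
open scoped Classical

/-- Relative entropy `H(θ|ν) = E_θ[log (dθ/dν)]`, with value `+∞` when `θ` is not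
absolutely continuous w.r.t. `ν` or the log-likelihood ratio is not integrable. -/
noncomputable def relEntropy {Ω : Type*} [MeasurableSpace Ω] (θ ν : Measure Ω) : EReal :=
  if θ ≪ ν ∧ Integrable (llr θ ν) θ then ((∫ ω, llr θ ν ω ∂θ : ℝ) : EReal) else ⊤

lemma mul_neg_log_le_one {x : ℝ} (hx : 0 ≤ x) : x * max (-log x) 0 ≤ 1 := by
  rcases eq_or_lt_of_le hx with h | h
  · simp [← h]
  rcases le_or_gt 1 x with h1 | h1
  · rw [max_eq_right (by simpa using Real.log_nonneg h1)]; simp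
  · have h2 : -log x ≤ x⁻¹ - 1 := by
      have := Real.log_le_sub_one_of_pos (inv_pos.mpr h)
      rwa [Real.log_inv] at this
    have h3 : max (-log x) 0 ≤ x⁻¹ := by
      exact max_le (h2.trans (by linarith)) (by positivity)
    calc x * max (-log x) 0 ≤ x * x⁻¹ := mul_le_mul_of_nonneg_left h3 hx
      _ = 1 := mul_inv_cancel₀ h.ne'

/-- In the abstract framework, for a bounded adapted drift `u`, the Girsanov identity
(the law of `W^u` under `dν̃^u = ρ(-δ_β u) dν` is the law of `W` under `ν`) together with
`E_ν[-log ρ(-δ_β u)] = ½ E_ν[|u|_H²]` yields `H(W^u∗ν | ν) ≤ ½ E_ν[|u|_H²]`.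
Here `q = |u|_H² = ∫₀¹ |u̇(s)|² ds ≥ 0`. -/
theorem stmt_16 {Ω : Type*} [MeasurableSpace Ω] (ν : Measure Ω) [IsProbabilityMeasure ν]
    (Wu : Ω → Ω) (hWu : Measurable Wu)
    (ρ : Ω → ℝ) (hρmeas : Measurable ρ) (hρpos : ∀ᵐ ω ∂ν, 0 < ρ ω)
    (hρmean : ∫ ω, ρ ω ∂ν = 1)
    (hlaw : Measure.map Wu (ν.withDensity (fun ω => ENNReal.ofReal (ρ ω))) = ν)
    (q : Ω → ℝ) (hq : 0 ≤ q) (hqint : Integrable q ν)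
    (hρlog : Integrable (fun ω => log (ρ ω)) ν)
    (hρq : ∫ ω, -log (ρ ω) ∂ν = (1 / 2) * ∫ ω, q ω ∂ν) :
    relEntropy (ν.map Wu) ν ≤ (((1 / 2) * ∫ ω, q ω ∂ν : ℝ) : EReal) := by
  set θ := ν.map Wu with hθdef
  have hθprob : IsProbabilityMeasure θ := Measure.isProbabilityMeasure_map hWu.aemeasurable
  set νt := ν.withDensity (fun ω => ENNReal.ofReal (ρ ω)) with hνtdef
  have hν_νt : ν ≪ νt :=
    withDensity_absolutelyContinuous' hρmeas.ennreal_ofReal.aemeasurable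
      (by filter_upwards [hρpos] with ω h
          exact (ENNReal.ofReal_pos.mpr h).ne')
  have hAC : θ ≪ ν := by
    have h := hν_νt.map hWu
    rwa [hlaw] at h
  set L := θ.rnDeriv ν with hLdef
  have hLmeas : Measurable L := Measure.measurable_rnDeriv θ ν
  -- key lintegral identity
  have hkey : ∫⁻ ω, L (Wu ω) * ENNReal.ofReal (ρ ω) ∂ν = 1 := by
    have h1 := lintegral_withDensity_eq_lintegral_mul ν hρmeas.ennreal_ofReal
      (hLmeas.comp hWu)
    simp only [Function.comp, Pi.mul_apply] at h1
    calc ∫⁻ ω, L (Wu ω) * ENNReal.ofReal (ρ ω) ∂ν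
        = ∫⁻ ω, ENNReal.ofReal (ρ ω) * L (Wu ω) ∂ν := by simp [mul_comm]
      _ = ∫⁻ ω, L (Wu ω) ∂νt := h1.symm
      _ = ∫⁻ x, L x ∂(Measure.map Wu νt) := (lintegral_map hLmeas hWu).symm
      _ = ∫⁻ x, L x ∂ν := by rw [hlaw]
      _ = θ Set.univ := Measure.lintegral_rnDeriv hAC
      _ = 1 := measure_univ
  -- a.e. facts about L ∘ Wu under ν
  have hfin : ∀ᵐ ω ∂ν, L (Wu ω) < ⊤ :=
    ae_of_ae_map hWu.aemeasurable (hAC.ae_le (Measure.rnDeriv_lt_top θ ν))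
  have hpos : ∀ᵐ ω ∂ν, 0 < L (Wu ω) :=
    ae_of_ae_map hWu.aemeasurable (Measure.rnDeriv_pos hAC)
  set g : Ω → ℝ := fun ω => (L (Wu ω)).toReal * ρ ω with hgdef
  have hgmeas : Measurable g := ((hLmeas.comp hWu).ennreal_toReal).mul hρmeas
  have hg_nonneg : 0 ≤ᵐ[ν] g := by
    filter_upwards [hρpos] with ω h using mul_nonneg ENNReal.toReal_nonneg h.le
  have hg_eq : ∀ᵐ ω ∂ν, ENNReal.ofReal (g ω) = L (Wu ω) * ENNReal.ofReal (ρ ω) := by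
    filter_upwards [hfin] with ω h
    rw [hgdef, ENNReal.ofReal_mul ENNReal.toReal_nonneg, ENNReal.ofReal_toReal h.ne]
  have hglint : ∫⁻ ω, ENNReal.ofReal (g ω) ∂ν = 1 := by
    rw [lintegral_congr_ae hg_eq, hkey]
  have hgint : Integrable g ν := by
    refine ⟨hgmeas.aestronglyMeasurable, ?_⟩
    rw [hasFiniteIntegral_iff_ofReal hg_nonneg, hglint]
    exact ENNReal.one_lt_top
  have hgintegral : ∫ ω, g ω ∂ν = 1 := by
    rw [integral_eq_lintegral_of_nonneg_ae hg_nonneg hgmeas.aestronglyMeasurable, hglint]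
    simp
  -- f = llr θ ν ∘ Wu
  set f : Ω → ℝ := fun ω => llr θ ν (Wu ω) with hfdef
  have hllrmeas : Measurable (llr θ ν) := measurable_llr θ ν
  have hfmeas : Measurable f := hllrmeas.comp hWu
  -- positive part bound
  have hApos : ∫⁻ ω, ENNReal.ofReal (max (f ω) 0) ∂ν < ⊤ := by
    have hbound : ∀ᵐ ω ∂ν, ENNReal.ofReal (max (f ω) 0)
        ≤ ENNReal.ofReal (g ω) + ENNReal.ofReal |log (ρ ω)| := by
      filter_upwards [hρpos, hpos, hfin] with ω hρω hLω hLfin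
      have ha : 0 < (L (Wu ω)).toReal := ENNReal.toReal_pos hLω.ne' hLfin.ne
      have h1 : f ω = log (g ω) - log (ρ ω) := by
        rw [hfdef, hgdef]
        simp only [llr]
        rw [Real.log_mul ha.ne' hρω.ne']
        ring
      have h2 : max (f ω) 0 ≤ g ω + |log (ρ ω)| := by
        have hgpos : 0 < g ω := mul_pos ha hρω
        have h3 : log (g ω) ≤ g ω := (Real.log_le_sub_one_of_pos hgpos).trans (by linarith)
        have : f ω ≤ g ω + |log (ρ ω)| := by
          rw [h1]
          have := neg_abs_le (log (ρ ω))
          linarith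
        exact max_le this (by positivity)
      calc ENNReal.ofReal (max (f ω) 0) ≤ ENNReal.ofReal (g ω + |log (ρ ω)|) :=
            ENNReal.ofReal_le_ofReal h2
        _ = ENNReal.ofReal (g ω) + ENNReal.ofReal |log (ρ ω)| :=
            ENNReal.ofReal_add (by positivity) (abs_nonneg _)
    calc ∫⁻ ω, ENNReal.ofReal (max (f ω) 0) ∂ν
        ≤ ∫⁻ ω, (ENNReal.ofReal (g ω) + ENNReal.ofReal |log (ρ ω)|) ∂ν :=
          lintegral_mono_ae hbound
      _ = (∫⁻ ω, ENNReal.ofReal (g ω) ∂ν) + ∫⁻ ω, ENNReal.ofReal |log (ρ ω)| ∂ν :=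
          lintegral_add_left hgmeas.ennreal_ofReal _
      _ < ⊤ := by
          rw [hglint]
          refine ENNReal.add_lt_top.mpr ⟨ENNReal.one_lt_top, ?_⟩
          have := hρlog.hasFiniteIntegral
          rwa [hasFiniteIntegral_iff_norm] at this
  -- negative part bound
  have hBneg : ∫⁻ ω, ENNReal.ofReal (max (-f ω) 0) ∂ν ≤ 1 := by
    have h1 : ∫⁻ ω, ENNReal.ofReal (max (-f ω) 0) ∂ν
        = ∫⁻ x, ENNReal.ofReal (max (-llr θ ν x) 0) ∂θ := by
      rw [hθdef, lintegral_map (f := fun x => ENNReal.ofReal (max (-llr (Measure.map Wu ν) ν x) 0)) ((hllrmeas.neg.max measurable_const).ennreal_ofReal) hWu]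
    have h2 : ∫⁻ x, ENNReal.ofReal (max (-llr θ ν x) 0) ∂θ
        = ∫⁻ x, L x * ENNReal.ofReal (max (-llr θ ν x) 0) ∂ν := by
      have h : ∫⁻ x, (fun x => ENNReal.ofReal (max (-llr θ ν x) 0)) x ∂ν.withDensity L
          = ∫⁻ x, (L * fun x => ENNReal.ofReal (max (-llr θ ν x) 0)) x ∂ν :=
        lintegral_withDensity_eq_lintegral_mul ν hLmeas
          ((hllrmeas.neg.max measurable_const).ennreal_ofReal)
      have heq : ν.withDensity L = θ := Measure.withDensity_rnDeriv_eq θ ν hAC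
      rw [heq] at h
      simpa using h
    have h3 : ∀ᵐ x ∂ν, L x * ENNReal.ofReal (max (-llr θ ν x) 0) ≤ 1 := by
      filter_upwards [Measure.rnDeriv_lt_top θ ν] with x hx
      have hxeq : L x = ENNReal.ofReal ((L x).toReal) := (ENNReal.ofReal_toReal hx.ne).symm
      rw [hxeq, ← ENNReal.ofReal_mul ENNReal.toReal_nonneg]
      rw [← ENNReal.ofReal_one]
      exact ENNReal.ofReal_le_ofReal (mul_neg_log_le_one ENNReal.toReal_nonneg)
    calc ∫⁻ ω, ENNReal.ofReal (max (-f ω) 0) ∂ν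
        = ∫⁻ x, L x * ENNReal.ofReal (max (-llr θ ν x) 0) ∂ν := by rw [h1, h2]
      _ ≤ ∫⁻ _, 1 ∂ν := lintegral_mono_ae h3
      _ = 1 := by simp
  -- integrability of f
  have hfint : Integrable f ν := by
    refine ⟨hfmeas.aestronglyMeasurable, ?_⟩
    rw [hasFiniteIntegral_iff_norm]
    have habs : ∀ ω, ENNReal.ofReal ‖f ω‖
        = ENNReal.ofReal (max (f ω) 0) + ENNReal.ofReal (max (-f ω) 0) := by
      intro ω
      rw [← ENNReal.ofReal_add (le_max_right _ _) (le_max_right _ _)]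
      congr 1
      rw [Real.norm_eq_abs]
      rcases le_or_gt 0 (f ω) with h | h
      · rw [abs_of_nonneg h, max_eq_left h, max_eq_right (by linarith)]; ring
      · rw [abs_of_neg h, max_eq_right h.le, max_eq_left (by linarith)]; ring
    calc ∫⁻ ω, ENNReal.ofReal ‖f ω‖ ∂ν
        = (∫⁻ ω, ENNReal.ofReal (max (f ω) 0) ∂ν)
          + ∫⁻ ω, ENNReal.ofReal (max (-f ω) 0) ∂ν := by
          simp_rw [habs]
          exact lintegral_add_left ((hfmeas.max measurable_const).ennreal_ofReal) _
      _ < ⊤ := ENNReal.add_lt_top.mpr ⟨hApos, hBneg.trans_lt ENNReal.one_lt_top⟩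
  have hllrint : Integrable (llr θ ν) θ := by
    rw [hθdef, integrable_map_measure hllrmeas.aestronglyMeasurable hWu.aemeasurable]
    exact hfint
  -- the inequality
  have hle : ∫ x, llr θ ν x ∂θ ≤ (1 / 2) * ∫ ω, q ω ∂ν := by
    have h1 : ∫ x, llr θ ν x ∂θ = ∫ ω, f ω ∂ν := by
      rw [hθdef, integral_map hWu.aemeasurable hllrmeas.aestronglyMeasurable]
    have h2 : ∀ᵐ ω ∂ν, f ω ≤ g ω - 1 - log (ρ ω) := by
      filter_upwards [hρpos, hpos, hfin] with ω hρω hLω hLfin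
      have ha : 0 < (L (Wu ω)).toReal := ENNReal.toReal_pos hLω.ne' hLfin.ne
      have hgpos : 0 < g ω := mul_pos ha hρω
      have h1' : f ω = log (g ω) - log (ρ ω) := by
        rw [hfdef, hgdef]
        simp only [llr]
        rw [Real.log_mul ha.ne' hρω.ne']
        ring
      have h3 : log (g ω) ≤ g ω - 1 := Real.log_le_sub_one_of_pos hgpos
      linarith
    have hg1 : Integrable (fun ω => g ω - 1) ν := hgint.sub (integrable_const 1)
    have hg2 : Integrable (fun ω => g ω - 1 - log (ρ ω)) ν := hg1.sub hρlog
    have h4 : ∫ ω, f ω ∂ν ≤ ∫ ω, (g ω - 1 - log (ρ ω)) ∂ν :=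
      integral_mono_ae hfint hg2 h2
    have h5 : ∫ ω, (g ω - 1 - log (ρ ω)) ∂ν = (1 / 2) * ∫ ω, q ω ∂ν := by
      rw [integral_sub hg1 hρlog, integral_sub hgint (integrable_const 1), hgintegral]
      simp only [integral_const, Measure.real, measure_univ, ENNReal.toReal_one, smul_eq_mul, one_mul]
      rw [← hρq, integral_neg]
      ring
    rw [h1]
    exact h4.trans h5.le
  rw [relEntropy, if_pos ⟨hAC, hllrint⟩]
  exact_mod_cast hle
end

section
/- Suppose f : Ω → ℝ is measurable on a probability space (Ω, ν) with E_ν[|f|(1+e^{−f})] < ∞, and suppose that for a family of measurable maps (W^u) indexed by drifts u ∈ D with H(W^u∗ν|ν) ≤ ½E_ν[|u|_H²] and E_{W^u∗ν}[f] = E_ν[f ∘ W^u]. Then −log E_ν[e^{−f}] ≤ inf_{u∈D} E_ν[f ∘ W^u + ½|u|_H²]. -/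
open MeasureTheory Real

/-- Nonnegativity of relative entropy (KL divergence) for probability measures. -/
lemma kl_nonneg_aux {α : Type*} [MeasurableSpace α] (μ ν : Measure α)
    [IsProbabilityMeasure μ] [IsProbabilityMeasure ν] (hμν : μ ≪ ν)
    (h : Integrable (llr μ ν) μ) : 0 ≤ ∫ x, llr μ ν x ∂μ := by
  have hexp : (fun x ↦ exp (-llr μ ν x)) =ᵐ[μ] fun x ↦ (ν.rnDeriv μ x).toReal :=
    exp_neg_llr hμν
  have hintexp : Integrable (fun x ↦ exp (-llr μ ν x)) μ :=
    (Measure.integrable_toReal_rnDeriv).congr hexp.symm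
  have hJ : exp (∫ x, -llr μ ν x ∂μ) ≤ ∫ x, exp (-llr μ ν x) ∂μ := by
    refine convexOn_exp.map_integral_le continuous_exp.continuousOn isClosed_univ
      (Filter.Eventually.of_forall fun x => Set.mem_univ _) h.neg ?_
    exact hintexp
  have h1 : ∫ x, exp (-llr μ ν x) ∂μ ≤ 1 := by
    rw [integral_congr_ae hexp, Measure.integral_toReal_rnDeriv']
    have : ν.real Set.univ = 1 := by simp
    rw [this]
    have : 0 ≤ (ν.singularPart μ).real Set.univ := ENNReal.toReal_nonneg
    linarith
  have : ∫ x, -llr μ ν x ∂μ ≤ 0 := by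
    by_contra hcon
    push_neg at hcon
    have := (exp_le_one_iff.mp (hJ.trans h1))
    linarith
  rw [integral_neg] at this
  linarith

/-- The easy inequality of the variational representation: if for each drift `u` in a
nonempty family `D`, the pushforward `θ_u = W^u∗ν` satisfies `H(θ_u|ν) ≤ ½ E_ν[|u|_H²]`
and `E_{θ_u}[f] = E_ν[f ∘ W^u]`, then
`-log E_ν[e^{-f}] ≤ inf_u E_ν[f ∘ W^u + ½ |u|_H²]`.
Here `nu u = |u|_H²` denotes the (pathwise) squared Cameron–Martin norm of `u`. -/
theorem stmt_17 {Ω : Type*} [MeasurableSpace Ω] (ν : Measure Ω) [IsProbabilityMeasure ν]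
    {ι : Type*} [Nonempty ι]
    (f : Ω → ℝ) (hf : Measurable f)
    (hint : Integrable (fun ω => |f ω| * (1 + exp (-f ω))) ν)
    (W : ι → Ω → Ω) (hW : ∀ u, Measurable (W u))
    (nu : ι → Ω → ℝ) (hnu : ∀ u, 0 ≤ nu u) (hnuint : ∀ u, Integrable (nu u) ν)
    (hac : ∀ u, ν.map (W u) ≪ ν)
    (hllr : ∀ u, Integrable (llr (ν.map (W u)) ν) (ν.map (W u)))
    (hent : ∀ u, ∫ ω, llr (ν.map (W u)) ν ω ∂(ν.map (W u)) ≤ (1 / 2) * ∫ ω, nu u ω ∂ν)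
    (hf' : ∀ u, Integrable (fun ω => f (W u ω)) ν)
    (hchange : ∀ u, ∫ ω, f ω ∂(ν.map (W u)) = ∫ ω, f (W u ω) ∂ν) :
    -log (∫ ω, exp (-f ω) ∂ν) ≤ ⨅ u : ι, ∫ ω, (f (W u ω) + nu u ω / 2) ∂ν := by
  -- Integrability of exp(-f) w.r.t. ν
  have hexpint : Integrable (fun ω => exp (-f ω)) ν := by
    refine Integrable.mono' (g := fun ω => exp 1 + |f ω| * (1 + exp (-f ω)))
      ((integrable_const _).add hint) (hf.neg.exp.aestronglyMeasurable) ?_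
    refine Filter.Eventually.of_forall fun ω => ?_
    rw [norm_of_nonneg (exp_pos _).le]
    show exp (-f ω) ≤ exp 1 + |f ω| * (1 + exp (-f ω))
    rcases le_or_gt 1 |f ω| with h1 | h1
    · have h2 : exp (-f ω) ≤ |f ω| * exp (-f ω) := le_mul_of_one_le_left (exp_pos _).le h1
      nlinarith [exp_pos 1, abs_nonneg (f ω), exp_pos (-f ω)]
    · have h2 : exp (-f ω) ≤ exp 1 := exp_le_exp.mpr (by
        have := abs_lt.mp h1; linarith)
      nlinarith [abs_nonneg (f ω), exp_pos (-f ω)]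
  refine le_ciInf fun u => ?_
  set θ := ν.map (W u) with hθ
  have : IsProbabilityMeasure θ := Measure.isProbabilityMeasure_map (hW u).aemeasurable
  have hfθ : Integrable f θ := by
    rw [hθ, integrable_map_measure hf.aestronglyMeasurable (hW u).aemeasurable]
    exact hf' u
  -- tilted measure
  have htilted : IsProbabilityMeasure (ν.tilted (fun ω => -f ω)) :=
    isProbabilityMeasure_tilted hexpint
  have hacθ : θ ≪ ν.tilted (fun ω => -f ω) :=
    (hac u).trans (absolutelyContinuous_tilted hexpint)
  have hintllr : Integrable (llr θ (ν.tilted (fun ω => -f ω))) θ :=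
    integrable_llr_tilted_right (hac u) hfθ.neg (hllr u) hexpint
  have hkl : 0 ≤ ∫ x, llr θ (ν.tilted (fun ω => -f ω)) x ∂θ :=
    kl_nonneg_aux θ _ hacθ hintllr
  have heq : ∫ x, llr θ (ν.tilted (fun ω => -f ω)) x ∂θ
      = ∫ x, llr θ ν x ∂θ - ∫ x, -f x ∂θ + log (∫ x, exp (-f x) ∂ν) :=
    integral_llr_tilted_right (hac u) hfθ.neg hexpint (hllr u)
  rw [heq, integral_neg] at hkl
  -- hkl : 0 ≤ ∫ llr θ ν dθ + ∫ f dθ + log ∫ exp(-f) dν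
  have hsplit : ∫ ω, (f (W u ω) + nu u ω / 2) ∂ν
      = ∫ ω, f (W u ω) ∂ν + (1 / 2) * ∫ ω, nu u ω ∂ν := by
    rw [integral_add (hf' u) ((hnuint u).div_const 2), integral_div]
    ring
  have hc := hchange u
  have he := hent u
  rw [hsplit, ← hc]
  linarith
end
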